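/- Let (Δ, γ) be a connected voltage graph, let G = ⟨γ(E_Δ)⟩ be the group generated by the voltages, let v₀ be a base vertex of Δ, let S be a spanning tree set of Δ, and let Γ₀ be the connected component of the derived graph Δ ×_γ G containing the vertex (v₀, 1_G). Then the set H = {h ∈ G : (v₀, h) is a vertex of Γ₀} is a subgroup of G, and H = ⟨γ_S(E_Δ)⟩, the subgroup generated by the values of the condensation γ_S of γ with respect to S and v₀. -/

import Mathlib

namespace VG

/-- A graph (directed multigraph): vertices, edges, initial and terminal endpoint maps. -/
structure MGraph : Type 1 where
  V : Type
  E : Type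
  ι : E → V
  τ : E → V

/-- A homomorphism of graphs. -/
structure Hom (Γ Δ : MGraph) where
  onV : Γ.V → Δ.V
  onE : Γ.E → Δ.E
  map_ι : ∀ e, Δ.ι (onE e) = onV (Γ.ι e)
  map_τ : ∀ e, Δ.τ (onE e) = onV (Γ.τ e)

/-- Composition of homomorphisms. -/
def Hom.comp {Γ₁ Γ₂ Γ₃ : MGraph} (g : Hom Γ₂ Γ₃) (f : Hom Γ₁ Γ₂) : Hom Γ₁ Γ₃ where
  onV := g.onV ∘ f.onV
  onE := g.onE ∘ f.onE
  map_ι e := by simp only [Function.comp_apply]; rw [g.map_ι, f.map_ι]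
  map_τ e := by simp only [Function.comp_apply]; rw [g.map_τ, f.map_τ]

/-- An isomorphism of graphs: a homomorphism bijective on vertices and on edges. -/
structure Iso (Γ Δ : MGraph) where
  onV : Γ.V ≃ Δ.V
  onE : Γ.E ≃ Δ.E
  map_ι : ∀ e, Δ.ι (onE e) = onV (Γ.ι e)
  map_τ : ∀ e, Δ.τ (onE e) = onV (Γ.τ e)

def Iso.toHom {Γ Δ : MGraph} (f : Iso Γ Δ) : Hom Γ Δ :=
  ⟨f.onV, f.onE, f.map_ι, f.map_τ⟩

/-- The automorphisms of a graph. -/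
abbrev Aut (Γ : MGraph) := Iso Γ Γ

theorem Iso.ext' {Γ Δ : MGraph} {f g : Iso Γ Δ} (hV : f.onV = g.onV) (hE : f.onE = g.onE) :
    f = g := by
  cases f; cases g; cases hV; cases hE; rfl

instance (Γ : MGraph) : Group (Aut Γ) where
  one := ⟨Equiv.refl _, Equiv.refl _, fun _ => rfl, fun _ => rfl⟩
  mul g h := ⟨h.onV.trans g.onV, h.onE.trans g.onE,
    fun e => by simp only [Equiv.trans_apply]; rw [g.map_ι, h.map_ι],
    fun e => by simp only [Equiv.trans_apply]; rw [g.map_τ, h.map_τ]⟩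
  inv g := ⟨g.onV.symm, g.onE.symm,
    fun e => by
      have h := g.map_ι (g.onE.symm e)
      rw [Equiv.apply_symm_apply] at h
      rw [h, Equiv.symm_apply_apply],
    fun e => by
      have h := g.map_τ (g.onE.symm e)
      rw [Equiv.apply_symm_apply] at h
      rw [h, Equiv.symm_apply_apply]⟩
  mul_assoc a b c := Iso.ext' (Equiv.ext fun _ => rfl) (Equiv.ext fun _ => rfl)
  one_mul a := Iso.ext' (Equiv.ext fun _ => rfl) (Equiv.ext fun _ => rfl)
  mul_one a := Iso.ext' (Equiv.ext fun _ => rfl) (Equiv.ext fun _ => rfl)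
  inv_mul_cancel a :=
    Iso.ext' (Equiv.ext fun x => a.onV.symm_apply_apply x)
      (Equiv.ext fun x => a.onE.symm_apply_apply x)

theorem Aut.mul_onV {Γ : MGraph} (g h : Aut Γ) (v : Γ.V) : (g * h).onV v = g.onV (h.onV v) := rfl
theorem Aut.mul_onE {Γ : MGraph} (g h : Aut Γ) (e : Γ.E) : (g * h).onE e = g.onE (h.onE e) := rfl
theorem Aut.one_onV {Γ : MGraph} (v : Γ.V) : (1 : Aut Γ).onV v = v := rfl
theorem Aut.inv_onV {Γ : MGraph} (g : Aut Γ) (v : Γ.V) : g⁻¹.onV v = g.onV.symm v := rfl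

/-- The outset of a vertex. -/
def Out (Γ : MGraph) (v : Γ.V) : Set Γ.E := {e | Γ.ι e = v}

/-- The inset of a vertex. -/
def In (Γ : MGraph) (v : Γ.V) : Set Γ.E := {e | Γ.τ e = v}

/-- A covering: a surjective homomorphism restricting to bijections on out-sets and in-sets. -/
structure IsCovering {Γ Δ : MGraph} (φ : Hom Γ Δ) : Prop where
  surjV : Function.Surjective φ.onV
  surjE : Function.Surjective φ.onE
  bijOut : ∀ v : Γ.V, Set.BijOn φ.onE (Out Γ v) (Out Δ (φ.onV v))
  bijIn : ∀ v : Γ.V, Set.BijOn φ.onE (In Γ v) (In Δ (φ.onV v))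

/-- The cover group of a covering: automorphisms `g` of `Γ` with `φ ∘ g = φ`. -/
def coverGroup {Γ Δ : MGraph} (φ : Hom Γ Δ) : Subgroup (Aut Γ) where
  carrier := {g | (∀ v, φ.onV (g.onV v) = φ.onV v) ∧ (∀ e, φ.onE (g.onE e) = φ.onE e)}
  one_mem' := ⟨fun _ => rfl, fun _ => rfl⟩
  mul_mem' := by
    rintro g h ⟨hgV, hgE⟩ ⟨hhV, hhE⟩
    exact ⟨fun v => by rw [Aut.mul_onV, hgV, hhV], fun e => by rw [Aut.mul_onE, hgE, hhE]⟩
  inv_mem' := by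
    rintro g ⟨hgV, hgE⟩
    refine ⟨fun v => ?_, fun e => ?_⟩
    · have h := hgV (g.onV.symm v)
      rw [Equiv.apply_symm_apply] at h
      exact h.symm
    · have h := hgE (g.onE.symm e)
      rw [Equiv.apply_symm_apply] at h
      exact h.symm

theorem mem_coverGroup {Γ Δ : MGraph} {φ : Hom Γ Δ} {g : Aut Γ} :
    g ∈ coverGroup φ ↔ (∀ v, φ.onV (g.onV v) = φ.onV v) ∧ (∀ e, φ.onE (g.onE e) = φ.onE e) :=
  Iff.rfl

/-- A covering is regular if its cover group acts transitively on all fibers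
(of vertices and of edges). -/
def IsRegular {Γ Δ : MGraph} (φ : Hom Γ Δ) : Prop :=
  (∀ v w : Γ.V, φ.onV v = φ.onV w → ∃ g ∈ coverGroup φ, g.onV v = w) ∧
  (∀ e f : Γ.E, φ.onE e = φ.onE f → ∃ g ∈ coverGroup φ, g.onE e = f)

/-- The orbit equivalence on vertices induced by a subgroup of automorphisms. -/
def vSetoid (Γ : MGraph) (G : Subgroup (Aut Γ)) : Setoid Γ.V where
  r v w := ∃ g ∈ G, g.onV v = w
  iseqv := by
    refine ⟨fun v => ⟨1, one_mem _, rfl⟩, ?_, ?_⟩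
    · rintro v w ⟨g, hg, rfl⟩
      exact ⟨g⁻¹, inv_mem hg, g.onV.symm_apply_apply v⟩
    · rintro u v w ⟨g, hg, rfl⟩ ⟨h, hh, rfl⟩
      exact ⟨h * g, mul_mem hh hg, rfl⟩

/-- The orbit equivalence on edges induced by a subgroup of automorphisms. -/
def eSetoid (Γ : MGraph) (G : Subgroup (Aut Γ)) : Setoid Γ.E where
  r e f := ∃ g ∈ G, g.onE e = f
  iseqv := by
    refine ⟨fun e => ⟨1, one_mem _, rfl⟩, ?_, ?_⟩
    · rintro e f ⟨g, hg, rfl⟩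
      exact ⟨g⁻¹, inv_mem hg, g.onE.symm_apply_apply e⟩
    · rintro e f d ⟨g, hg, rfl⟩ ⟨h, hh, rfl⟩
      exact ⟨h * g, mul_mem hh hg, rfl⟩

/-- The quotient graph of `Γ` by a subgroup `G` of automorphisms. -/
def quotientGraph (Γ : MGraph) (G : Subgroup (Aut Γ)) : MGraph where
  V := Quotient (vSetoid Γ G)
  E := Quotient (eSetoid Γ G)
  ι := Quotient.map' Γ.ι (by rintro e f ⟨g, hg, rfl⟩; exact ⟨g, hg, (g.map_ι e).symm⟩)
  τ := Quotient.map' Γ.τ (by rintro e f ⟨g, hg, rfl⟩; exact ⟨g, hg, (g.map_τ e).symm⟩)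

/-- The canonical projection of a graph onto its quotient by a subgroup of automorphisms. -/
def quotientProj (Γ : MGraph) (G : Subgroup (Aut Γ)) : Hom Γ (quotientGraph Γ G) where
  onV := Quotient.mk (vSetoid Γ G)
  onE := Quotient.mk (eSetoid Γ G)
  map_ι e := rfl
  map_τ e := rfl

/-- A subgroup of automorphisms acts freely: nonidentity elements move every vertex. -/
def ActsFreely (Γ : MGraph) (G : Subgroup (Aut Γ)) : Prop :=
  ∀ g ∈ G, g ≠ 1 → ∀ v : Γ.V, g.onV v ≠ v

/-! ### Walks -/

/-- The vertex from which a step (edge together with a direction of traversal) departs. -/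
def stepSrc (Γ : MGraph) (s : Γ.E × Bool) : Γ.V := cond s.2 (Γ.ι s.1) (Γ.τ s.1)

/-- The vertex at which a step arrives. -/
def stepTgt (Γ : MGraph) (s : Γ.E × Bool) : Γ.V := cond s.2 (Γ.τ s.1) (Γ.ι s.1)

/-- A list of steps forms a chain starting at a given vertex. -/
def chain (Γ : MGraph) : Γ.V → List (Γ.E × Bool) → Prop
  | _, [] => True
  | v, s :: rest => stepSrc Γ s = v ∧ chain Γ (stepTgt Γ s) rest

/-- The final vertex after traversing a list of steps from a given vertex. -/
def endOf (Γ : MGraph) : Γ.V → List (Γ.E × Bool) → Γ.V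
  | v, [] => v
  | _, s :: rest => endOf Γ (stepTgt Γ s) rest

/-- A walk: an initial vertex and a compatible list of steps, each traversing an
edge either along (`true`) or against (`false`) its orientation. -/
structure Walk (Γ : MGraph) where
  first : Γ.V
  steps : List (Γ.E × Bool)
  ok : chain Γ first steps

/-- The terminal vertex of a walk. -/
def Walk.last {Γ : MGraph} (w : Walk Γ) : Γ.V := endOf Γ w.first w.steps

/-- Two vertices joined by a walk. -/
def Reachable (Γ : MGraph) (u v : Γ.V) : Prop :=
  ∃ w : Walk Γ, w.first = u ∧ w.last = v

/-- A graph is connected if any two vertices are joined by a walk. -/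
def Connected (Γ : MGraph) : Prop :=
  ∀ u v : Γ.V, Reachable Γ u v

def Hom.mapStep {Γ Δ : MGraph} (φ : Hom Γ Δ) (s : Γ.E × Bool) : Δ.E × Bool := (φ.onE s.1, s.2)

theorem Hom.stepSrc_map {Γ Δ : MGraph} (φ : Hom Γ Δ) (s : Γ.E × Bool) :
    stepSrc Δ (φ.mapStep s) = φ.onV (stepSrc Γ s) := by
  obtain ⟨e, b⟩ := s
  cases b <;> simp [stepSrc, Hom.mapStep, φ.map_ι, φ.map_τ]

theorem Hom.stepTgt_map {Γ Δ : MGraph} (φ : Hom Γ Δ) (s : Γ.E × Bool) :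
    stepTgt Δ (φ.mapStep s) = φ.onV (stepTgt Γ s) := by
  obtain ⟨e, b⟩ := s
  cases b <;> simp [stepTgt, Hom.mapStep, φ.map_ι, φ.map_τ]

theorem Hom.chain_map {Γ Δ : MGraph} (φ : Hom Γ Δ) (l : List (Γ.E × Bool)) (v : Γ.V)
    (h : chain Γ v l) : chain Δ (φ.onV v) (l.map φ.mapStep) := by
  induction l generalizing v with
  | nil => trivial
  | cons s rest ih =>
    exact ⟨by rw [φ.stepSrc_map, h.1], by rw [φ.stepTgt_map]; exact ih _ h.2⟩

/-- The image of a walk under a homomorphism (edge-by-edge, preserving directions). -/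
def Walk.map {Γ Δ : MGraph} (φ : Hom Γ Δ) (w : Walk Γ) : Walk Δ :=
  ⟨φ.onV w.first, w.steps.map φ.mapStep, φ.chain_map w.steps w.first w.ok⟩

theorem endOf_map {Γ Δ : MGraph} (φ : Hom Γ Δ) (l : List (Γ.E × Bool)) (v : Γ.V) :
    endOf Δ (φ.onV v) (l.map φ.mapStep) = φ.onV (endOf Γ v l) := by
  induction l generalizing v with
  | nil => rfl
  | cons s rest ih =>
    show endOf Δ (stepTgt Δ (φ.mapStep s)) (rest.map φ.mapStep) = _
    rw [φ.stepTgt_map]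
    exact ih _

theorem chain_append (Γ : MGraph) (l₁ l₂ : List (Γ.E × Bool)) (v : Γ.V)
    (h₁ : chain Γ v l₁) (h₂ : chain Γ (endOf Γ v l₁) l₂) : chain Γ v (l₁ ++ l₂) := by
  induction l₁ generalizing v with
  | nil => exact h₂
  | cons s rest ih => exact ⟨h₁.1, ih _ h₁.2 h₂⟩

theorem endOf_append (Γ : MGraph) (l₁ l₂ : List (Γ.E × Bool)) (v : Γ.V) :
    endOf Γ v (l₁ ++ l₂) = endOf Γ (endOf Γ v l₁) l₂ := by
  induction l₁ generalizing v with
  | nil => rfl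
  | cons s rest ih => exact ih _

/-- Concatenation of walks. -/
def Walk.append {Γ : MGraph} (w₁ w₂ : Walk Γ) (h : w₁.last = w₂.first) : Walk Γ :=
  ⟨w₁.first, w₁.steps ++ w₂.steps, chain_append Γ _ _ _ w₁.ok (by rw [show endOf Γ w₁.first w₁.steps = w₂.first from h]; exact w₂.ok)⟩

theorem Walk.append_last {Γ : MGraph} (w₁ w₂ : Walk Γ) (h : w₁.last = w₂.first) :
    (w₁.append w₂ h).last = w₂.last := by
  show endOf Γ w₁.first (w₁.steps ++ w₂.steps) = _
  rw [endOf_append, show endOf Γ w₁.first w₁.steps = w₂.first from h]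
  rfl

theorem Reachable.trans {Γ : MGraph} {u v w : Γ.V}
    (h₁ : Reachable Γ u v) (h₂ : Reachable Γ v w) : Reachable Γ u w := by
  obtain ⟨p, hp1, hp2⟩ := h₁
  obtain ⟨q, hq1, hq2⟩ := h₂
  exact ⟨p.append q (by rw [hp2, hq1]), hp1, by rw [Walk.append_last]; exact hq2⟩

/-- A single forward step along an edge, as a walk. -/
def Walk.single {Γ : MGraph} (e : Γ.E) : Walk Γ :=
  ⟨Γ.ι e, [(e, true)], ⟨rfl, trivial⟩⟩

def flipStep {Γ : MGraph} (s : Γ.E × Bool) : Γ.E × Bool := (s.1, !s.2)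

theorem stepSrc_flip (Γ : MGraph) (s : Γ.E × Bool) : stepSrc Γ (flipStep s) = stepTgt Γ s := by
  obtain ⟨e, b⟩ := s; cases b <;> rfl

theorem stepTgt_flip (Γ : MGraph) (s : Γ.E × Bool) : stepTgt Γ (flipStep s) = stepSrc Γ s := by
  obtain ⟨e, b⟩ := s; cases b <;> rfl

theorem endOf_reverse (Γ : MGraph) (l : List (Γ.E × Bool)) (v : Γ.V) (h : chain Γ v l) :
    endOf Γ (endOf Γ v l) (l.reverse.map flipStep) = v := by
  induction l generalizing v with
  | nil => rfl
  | cons s rest ih =>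
    rw [List.reverse_cons, List.map_append]
    show endOf Γ (endOf Γ (stepTgt Γ s) rest) ((rest.reverse.map flipStep) ++ [flipStep s]) = v
    rw [endOf_append, ih _ h.2]
    show stepTgt Γ (flipStep s) = v
    rw [stepTgt_flip]; exact h.1

theorem chain_reverse (Γ : MGraph) (l : List (Γ.E × Bool)) (v : Γ.V) (h : chain Γ v l) :
    chain Γ (endOf Γ v l) (l.reverse.map flipStep) := by
  induction l generalizing v with
  | nil => trivial
  | cons s rest ih =>
    rw [List.reverse_cons, List.map_append]
    show chain Γ (endOf Γ (stepTgt Γ s) rest) _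
    refine chain_append Γ _ _ _ (ih _ h.2) ?_
    rw [endOf_reverse Γ rest _ h.2]
    exact ⟨by rw [stepSrc_flip], trivial⟩

/-- The reversal of a walk. -/
def Walk.reverse {Γ : MGraph} (w : Walk Γ) : Walk Γ :=
  ⟨w.last, w.steps.reverse.map flipStep, chain_reverse Γ w.steps w.first w.ok⟩

theorem Walk.reverse_last {Γ : MGraph} (w : Walk Γ) : w.reverse.last = w.first :=
  endOf_reverse Γ w.steps w.first w.ok

theorem Reachable.refl' (Γ : MGraph) (v : Γ.V) : Reachable Γ v v :=
  ⟨⟨v, [], trivial⟩, rfl, rfl⟩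

theorem Reachable.symm' {Γ : MGraph} {u v : Γ.V} (h : Reachable Γ u v) : Reachable Γ v u := by
  obtain ⟨p, h1, h2⟩ := h
  exact ⟨p.reverse, by rw [show p.reverse.first = p.last from rfl, h2],
    by rw [p.reverse_last, h1]⟩

/-- The connected-component equivalence on vertices. -/
def reachSetoid (Γ : MGraph) : Setoid Γ.V where
  r := Reachable Γ
  iseqv := ⟨Reachable.refl' Γ, Reachable.symm', Reachable.trans⟩

/-! ### Subgraphs, trees, lifts -/

/-- A subgraph of a graph. -/
structure Subgraph (Γ : MGraph) where
  verts : Set Γ.V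
  edges : Set Γ.E
  ι_mem : ∀ e ∈ edges, Γ.ι e ∈ verts
  τ_mem : ∀ e ∈ edges, Γ.τ e ∈ verts

/-- The graph determined by a subgraph. -/
def Subgraph.toMGraph {Γ : MGraph} (H : Subgraph Γ) : MGraph where
  V := ↥H.verts
  E := ↥H.edges
  ι e := ⟨Γ.ι e.1, H.ι_mem e.1 e.2⟩
  τ e := ⟨Γ.τ e.1, H.τ_mem e.1 e.2⟩

/-- The inclusion homomorphism of a subgraph. -/
def Subgraph.incl {Γ : MGraph} (H : Subgraph Γ) : Hom H.toMGraph Γ :=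
  ⟨fun v => v.1, fun e => e.1, fun _ => rfl, fun _ => rfl⟩

/-- The set of endpoints of a set of edges. -/
def endpoints (Γ : MGraph) (S : Set Γ.E) : Set Γ.V := {v | ∃ e ∈ S, Γ.ι e = v ∨ Γ.τ e = v}

/-- The subgraph induced by a set of edges. -/
def edgeInduced (Γ : MGraph) (S : Set Γ.E) : Subgraph Γ where
  verts := endpoints Γ S
  edges := S
  ι_mem e he := ⟨e, he, Or.inl rfl⟩
  τ_mem e he := ⟨e, he, Or.inr rfl⟩

/-- The list of vertices visited when traversing a list of steps from a vertex. -/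
def vertsOf (Γ : MGraph) : Γ.V → List (Γ.E × Bool) → List Γ.V
  | v, [] => [v]
  | v, s :: rest => v :: vertsOf Γ (stepTgt Γ s) rest

/-- A path: a walk with no repeated edge and no repeated vertex
(except possibly the initial and terminal vertex coinciding). -/
def Walk.IsPath {Γ : MGraph} (w : Walk Γ) : Prop :=
  (w.steps.map Prod.fst).Nodup ∧
  (vertsOf Γ w.first w.steps).dropLast.Nodup ∧
  (vertsOf Γ w.first w.steps).tail.Nodup

/-- A cyclic walk: terminal vertex equals initial vertex. -/
def Walk.IsCyclic {Γ : MGraph} (w : Walk Γ) : Prop := w.last = w.first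

/-- A graph is acyclic if it has no nontrivial cyclic path. -/
def Acyclic (Γ : MGraph) : Prop :=
  ¬ ∃ w : Walk Γ, w.steps ≠ [] ∧ w.IsCyclic ∧ w.IsPath

/-- A spanning tree set: an edge set inducing an acyclic connected subgraph
containing all vertices. -/
def IsSpanningTreeSet (Δ : MGraph) (S : Set Δ.E) : Prop :=
  Acyclic (edgeInduced Δ S).toMGraph ∧ Connected (edgeInduced Δ S).toMGraph ∧
  ∀ v : Δ.V, v ∈ endpoints Δ S

/-- A lift of `Δ` with respect to a covering `φ : Γ → Δ`: a connected subgraph of `Γ`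
on whose edges `φ` restricts to a bijection onto the edges of `Δ`. -/
def IsLift {Γ Δ : MGraph} (φ : Hom Γ Δ) (Λ : Subgraph Γ) : Prop :=
  Connected Λ.toMGraph ∧ Set.BijOn φ.onE Λ.edges Set.univ

/-- A proper lift, with designated edge set `S₀` lifting a spanning tree set of `Δ`:
every edge of the lift has its initial endpoint among the endpoints of `S₀`
(the interior vertices). -/
def IsProperLiftWith {Γ Δ : MGraph} (φ : Hom Γ Δ) (Λ : Subgraph Γ) (S₀ : Set Γ.E) : Prop :=
  IsLift φ Λ ∧ S₀ ⊆ Λ.edges ∧ IsSpanningTreeSet Δ (φ.onE '' S₀) ∧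
  ∀ e ∈ Λ.edges, Γ.ι e ∈ endpoints Γ S₀

/-- A proper lift. -/
def IsProperLift {Γ Δ : MGraph} (φ : Hom Γ Δ) (Λ : Subgraph Γ) : Prop :=
  ∃ S₀ : Set Γ.E, IsProperLiftWith φ Λ S₀

/-! ### Voltage graphs -/

/-- The voltage of a walk: the ordered product of the voltages of its edges,
inverted when an edge is traversed against its orientation. -/
def voltage {Δ : MGraph} {G : Type} [Group G] (γ : Δ.E → G) (w : Walk Δ) : G :=
  (w.steps.map fun s => cond s.2 (γ s.1) (γ s.1)⁻¹).prod

/-- The derived graph of a voltage graph `(Δ, γ)`. -/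
def derivedGraph (Δ : MGraph) {G : Type} [Group G] (γ : Δ.E → G) : MGraph where
  V := Δ.V × G
  E := Δ.E × G
  ι e := (Δ.ι e.1, e.2)
  τ e := (Δ.τ e.1, e.2 * γ e.1)

/-- The canonical covering of a derived graph onto its base. -/
def derivedProj (Δ : MGraph) {G : Type} [Group G] (γ : Δ.E → G) : Hom (derivedGraph Δ γ) Δ :=
  ⟨Prod.fst, Prod.fst, fun _ => rfl, fun _ => rfl⟩

/-- Restriction of a voltage assignment to the subgroup generated by its values. -/
def restrictToClosure {G : Type} [Group G] {α : Type} (γ : α → G) :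
    α → Subgroup.closure (Set.range γ) :=
  fun a => ⟨γ a, Subgroup.subset_closure (Set.mem_range_self a)⟩

/-- The connected component of a vertex, as a subgraph. -/
def componentOf (Γ : MGraph) (v : Γ.V) : Subgraph Γ where
  verts := {u | Reachable Γ v u}
  edges := {e | Reachable Γ v (Γ.ι e)}
  ι_mem e he := he
  τ_mem e he := Reachable.trans he ⟨Walk.single e, rfl, rfl⟩

/-- `γ'` is the condensation of `γ` with respect to the spanning tree set `S` and the base
vertex `v₀`: edges of `S` get the identity, and an edge `e ∉ S` gets the voltage of the
return walk of `e` from `v₀` via `S`. -/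
def IsCondensation {Δ : MGraph} {G : Type} [Group G] (γ : Δ.E → G) (S : Set Δ.E)
    (v₀ : Δ.V) (γ' : Δ.E → G) : Prop :=
  (∀ e ∈ S, γ' e = 1) ∧
  ∀ e ∉ S, ∃ p₁ p₂ : Walk Δ,
    p₁.first = v₀ ∧ p₁.last = Δ.ι e ∧ p₂.first = Δ.τ e ∧ p₂.last = v₀ ∧
    p₁.IsPath ∧ p₂.IsPath ∧
    (∀ s ∈ p₁.steps, s.1 ∈ S) ∧ (∀ s ∈ p₂.steps, s.1 ∈ S) ∧
    γ' e = voltage γ p₁ * γ e * voltage γ p₂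

/-- `γ` is the voltage assignment on `Δ` with respect to the proper lift `Λ` (with interior
determined by `S₀`): interior edges of the lift give voltage `1`, and a boundary edge with
terminal endpoint in `g · V_Λ⁰` gives voltage `g`. -/
def IsVoltageWrt {Γ Δ : MGraph} (φ : Hom Γ Δ) (Λ : Subgraph Γ) (S₀ : Set Γ.E)
    (γ : Δ.E → Aut Γ) : Prop :=
  (∀ eΔ : Δ.E, γ eΔ ∈ coverGroup φ) ∧
  ∀ e ∈ Λ.edges,
    (Γ.τ e ∈ endpoints Γ S₀ → γ (φ.onE e) = 1) ∧
    (Γ.τ e ∉ endpoints Γ S₀ → Γ.τ e ∈ (γ (φ.onE e)).onV '' endpoints Γ S₀)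

/-- A good covering of a voltage graph: every cyclic walk of trivial voltage lifts
only to cyclic walks. -/
def IsGoodCovering {Δ Δtop : MGraph} {G : Type} [Group G] (γ : Δ.E → G)
    (μ : Hom Δtop Δ) : Prop :=
  ∀ p : Walk Δ, p.IsCyclic → voltage γ p = 1 →
    ∀ q : Walk Δtop, Walk.map μ q = p → q.IsCyclic

/-! ### Product graphs and common covers -/

/-- The product of two graphs. -/
def prodGraph (Δ₁ Δ₂ : MGraph) : MGraph where
  V := Δ₁.V × Δ₂.V
  E := Δ₁.E × Δ₂.E
  ι e := (Δ₁.ι e.1, Δ₂.ι e.2)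
  τ e := (Δ₁.τ e.1, Δ₂.τ e.2)

/-- First coordinate projection from a subgraph of a product graph. -/
def sgProj₁ {Δ₁ Δ₂ : MGraph} (H : Subgraph (prodGraph Δ₁ Δ₂)) : Hom H.toMGraph Δ₁ where
  onV v := (v.1 : Δ₁.V × Δ₂.V).1
  onE e := (e.1 : Δ₁.E × Δ₂.E).1
  map_ι e := rfl
  map_τ e := rfl

/-- Second coordinate projection from a subgraph of a product graph. -/
def sgProj₂ {Δ₁ Δ₂ : MGraph} (H : Subgraph (prodGraph Δ₁ Δ₂)) : Hom H.toMGraph Δ₂ where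
  onV v := (v.1 : Δ₁.V × Δ₂.V).2
  onE e := (e.1 : Δ₁.E × Δ₂.E).2
  map_ι e := rfl
  map_τ e := rfl

/-- A good common cover of two voltage graphs: a connected subgraph of the product graph
whose coordinate projections are coverings, each a good covering of the respective
voltage graph. -/
def IsGoodCommonCover {Δ₁ Δ₂ : MGraph} {K₁ K₂ : Type} [Group K₁] [Group K₂]
    (γ₁ : Δ₁.E → K₁) (γ₂ : Δ₂.E → K₂) (H : Subgraph (prodGraph Δ₁ Δ₂)) : Prop :=
  Connected H.toMGraph ∧
  IsCovering (sgProj₁ H) ∧ IsCovering (sgProj₂ H) ∧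
  IsGoodCovering γ₁ (sgProj₁ H) ∧ IsGoodCovering γ₂ (sgProj₂ H)

/-- A successful good common cover: both projections are regular, and there is an
automorphism `α` of the cover fixing a spanning tree set `S_⊤` such that the
correspondence between the condensed lifted voltages (via `α`) extends to a group
isomorphism of the generated voltage groups. -/
def IsSuccessfulGoodCommonCover {Δ₁ Δ₂ : MGraph} {K₁ K₂ : Type} [Group K₁] [Group K₂]
    (γ₁ : Δ₁.E → K₁) (γ₂ : Δ₂.E → K₂) (H : Subgraph (prodGraph Δ₁ Δ₂)) : Prop :=
  IsGoodCommonCover γ₁ γ₂ H ∧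
  IsRegular (sgProj₁ H) ∧ IsRegular (sgProj₂ H) ∧
  ∃ (Stop : Set H.toMGraph.E) (vtop : H.toMGraph.V)
    (γ₁' : H.toMGraph.E → K₁) (γ₂' : H.toMGraph.E → K₂) (α : Aut H.toMGraph),
    IsSpanningTreeSet H.toMGraph Stop ∧
    IsCondensation (fun e => γ₁ ((sgProj₁ H).onE e)) Stop vtop γ₁' ∧
    IsCondensation (fun e => γ₂ ((sgProj₂ H).onE e)) Stop vtop γ₂' ∧
    (∀ e ∈ Stop, α.onE e = e) ∧
    ∃ F : ↥(Subgroup.closure (Set.range γ₁')) ≃* ↥(Subgroup.closure (Set.range γ₂')),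
      ∀ e : H.toMGraph.E, (F (restrictToClosure γ₁' e) : K₂) = γ₂' (α.onE e)

/-- A good common cover with regular projections fails if it is not successful. -/
def FailsAsCommonCover {Δ₁ Δ₂ : MGraph} {K₁ K₂ : Type} [Group K₁] [Group K₂]
    (γ₁ : Δ₁.E → K₁) (γ₂ : Δ₂.E → K₂) (H : Subgraph (prodGraph Δ₁ Δ₂)) : Prop :=
  IsGoodCommonCover γ₁ γ₂ H ∧
  IsRegular (sgProj₁ H) ∧ IsRegular (sgProj₂ H) ∧
  ¬ IsSuccessfulGoodCommonCover γ₁ γ₂ H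


/-! ### Auxiliary lemmas -/

section Aux

theorem endOf_cons (Γ : MGraph) (v : Γ.V) (s : Γ.E × Bool) (l : List (Γ.E × Bool)) :
    endOf Γ v (s :: l) = endOf Γ (stepTgt Γ s) l := rfl

variable {Δ' : MGraph} {G : Type} [Group G]

/-- The value contributed by one step to a voltage product. -/
def stepVal (γ : Δ'.E → G) (s : Δ'.E × Bool) : G := cond s.2 (γ s.1) (γ s.1)⁻¹

/-- The voltage of a list of steps. -/
def volList (γ : Δ'.E → G) (l : List (Δ'.E × Bool)) : G := (l.map (stepVal γ)).prod

theorem voltage_eq_volList (γ : Δ'.E → G) (w : Walk Δ') : voltage γ w = volList γ w.steps := rfl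

theorem volList_nil (γ : Δ'.E → G) : volList γ [] = 1 := rfl

theorem volList_cons (γ : Δ'.E → G) (s : Δ'.E × Bool) (l : List (Δ'.E × Bool)) :
    volList γ (s :: l) = stepVal γ s * volList γ l := by simp [volList]

theorem volList_append (γ : Δ'.E → G) (l₁ l₂ : List (Δ'.E × Bool)) :
    volList γ (l₁ ++ l₂) = volList γ l₁ * volList γ l₂ := by simp [volList]

theorem stepVal_flip (γ : Δ'.E → G) (s : Δ'.E × Bool) :
    stepVal γ (flipStep s) = (stepVal γ s)⁻¹ := by
  obtain ⟨e, b⟩ := s; cases b <;> simp [stepVal, flipStep]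

theorem volList_reverse (γ : Δ'.E → G) (l : List (Δ'.E × Bool)) :
    volList γ (l.reverse.map flipStep) = (volList γ l)⁻¹ := by
  induction l with
  | nil => simp [volList]
  | cons s rest ih =>
    rw [List.reverse_cons, List.map_append, volList_append, ih, volList_cons]
    simp [volList, stepVal_flip, mul_inv_rev]

theorem chain_split {Γ : MGraph} (l₁ l₂ : List (Γ.E × Bool)) (v : Γ.V)
    (h : chain Γ v (l₁ ++ l₂)) : chain Γ v l₁ ∧ chain Γ (endOf Γ v l₁) l₂ := by
  induction l₁ generalizing v with
  | nil => exact ⟨trivial, h⟩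
  | cons s rest ih =>
    obtain ⟨h1, h2⟩ := h
    obtain ⟨h3, h4⟩ := ih _ h2
    exact ⟨⟨h1, h3⟩, h4⟩

theorem chain_getElem {Γ : MGraph} : ∀ (l : List (Γ.E × Bool)) (v : Γ.V), chain Γ v l →
    ∀ (i : ℕ) (hi : i < l.length),
      stepSrc Γ (l[i]'hi) = endOf Γ v (l.take i) ∧
      stepTgt Γ (l[i]'hi) = endOf Γ v (l.take (i + 1)) := by
  intro l
  induction l with
  | nil => intro v _ i hi; simp at hi
  | cons s rest ih =>
    intro v hch i hi
    cases i with
    | zero => exact ⟨hch.1, rfl⟩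
    | succ k =>
      have h := ih (stepTgt Γ s) hch.2 k (by simpa using hi)
      simpa [List.take_succ_cons, endOf_cons] using h

theorem vertsOf_eq {Γ : MGraph} : ∀ (l : List (Γ.E × Bool)) (v : Γ.V),
    vertsOf Γ v l = (List.range (l.length + 1)).map (fun i => endOf Γ v (l.take i)) := by
  intro l
  induction l with
  | nil => intro v; simp [vertsOf, endOf]
  | cons s rest ih =>
    intro v
    show v :: vertsOf Γ (stepTgt Γ s) rest = _
    conv_rhs => rw [List.length_cons, List.range_succ_eq_map, List.map_cons, List.map_map]
    rw [ih]
    refine congrArg₂ _ rfl ?_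
    apply List.map_congr_left
    intro i _
    show endOf Γ (stepTgt Γ s) (rest.take i) = endOf Γ v ((s :: rest).take (i + 1))
    rw [List.take_succ_cons, endOf_cons]

theorem dup_of_not_nodup_range_map {β : Type*} (n : ℕ) (f : ℕ → β)
    (h : ¬ ((List.range n).map f).Nodup) : ∃ i j, i < j ∧ j < n ∧ f i = f j := by
  rw [List.nodup_map_iff_inj_on List.nodup_range] at h
  push_neg at h
  obtain ⟨i, hi, j, hj, hfe, hne⟩ := h
  simp only [List.mem_range] at hi hj
  rcases Nat.lt_or_ge i j with h' | h'
  · exact ⟨i, j, h', hj, hfe⟩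
  · exact ⟨j, i, by omega, hi, hfe.symm⟩

theorem dup_getElem_of_not_nodup {α : Type*} {L : List α} (h : ¬ L.Nodup) :
    ∃ (i j : ℕ) (hi : i < L.length) (hj : j < L.length), i < j ∧ L[i]'hi = L[j]'hj := by
  rw [List.nodup_iff_injective_getElem] at h
  unfold Function.Injective at h
  push_neg at h
  obtain ⟨⟨a, ha⟩, ⟨b, hb⟩, he, hne⟩ := h
  simp only at he
  have hab : a ≠ b := fun hh => hne (Fin.ext hh)
  rcases Nat.lt_or_ge a b with h' | h'
  · exact ⟨a, b, ha, hb, h', he⟩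
  · exact ⟨b, a, hb, ha, by omega, he.symm⟩

end Aux
section Backtrack

theorem exists_backtrack {Γ : MGraph} (hA : Acyclic Γ) :
    ∀ (n : ℕ) (l : List (Γ.E × Bool)) (v : Γ.V), l.length = n → l ≠ [] →
      chain Γ v l → endOf Γ v l = v →
      ∃ l₁ s l₂, l = l₁ ++ s :: flipStep s :: l₂ := by
  intro n
  induction n using Nat.strong_induction_on with
  | _ n IH =>
  intro l v hlen hne hch hcl
  by_contra hbt
  push_neg at hbt
  subst hlen
  have hpos : 0 < l.length := List.length_pos_iff.mpr hne
  set f : ℕ → Γ.V := fun i => endOf Γ v (l.take i) with hf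
  have hfu : ∀ k, f k = endOf Γ v (List.take k l) := fun _ => rfl
  have hfl : f l.length = f 0 := by
    rw [hfu, hfu, List.take_length, List.take_zero]
    exact hcl
  by_cases hnd : ((List.range l.length).map f).Nodup
  · -- no repeated vertex: the walk is a cyclic path, contradicting acyclicity
    have hinj : ∀ i j, i < l.length → j < l.length → f i = f j → i = j := fun i j hi hj hij =>
      (List.nodup_map_iff_inj_on List.nodup_range).mp hnd i (List.mem_range.mpr hi) j
        (List.mem_range.mpr hj) hij
    -- no repeated edge
    have hedges : (l.map Prod.fst).Nodup := by
      by_contra hend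
      obtain ⟨i, j, hi', hj', hij, he⟩ := dup_getElem_of_not_nodup hend
      rw [List.length_map] at hi' hj'
      rw [List.getElem_map, List.getElem_map] at he
      obtain ⟨hsrci, htgti⟩ := chain_getElem l v hch i hi'
      obtain ⟨hsrcj, htgtj⟩ := chain_getElem l v hch j hj'
      set si := l[i]'hi' with hsi
      set sj := l[j]'hj' with hsj
      have hmix : f (i + 1) = f j → f i = f (j + 1) → sj = flipStep si → False := by
        intro h1 h2 h3
        have hj1 : i + 1 = j := hinj (i + 1) j (by omega) hj' h1
        have h4 : f i = f (i + 2) := by rw [h2]; congr 1; omega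
        have hn2 : i + 2 = l.length := by
          by_contra h'
          have := hinj i (i + 2) hi' (by omega) h4
          omega
        have hi0 : i = 0 := by
          have h5 : f i = f 0 := by rw [h4, hn2, hfl]
          exact hinj i 0 hi' (by omega) h5
        have hj2 : j = 1 := by omega
        have hl2 : l.length = 2 := by omega
        subst hi0; subst hj2
        have hle : l = [si, sj] := by
          apply List.ext_getElem (by simp [hl2])
          intro k h1' h2'
          simp only [hl2] at h1'
          interval_cases k
          · simp [hsi]
          · simp [hsj]
        exact hbt [] si [] (by rw [hle, h3]; rfl)
      rcases hb1 : si.2 <;> rcases hb2 : sj.2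
      · -- both against orientation
        rw [stepSrc, hb1] at hsrci
        rw [stepSrc, hb2] at hsrcj
        simp only [cond_false] at hsrci hsrcj
        have : f i = f j := by rw [hfu, hfu, ← hsrci, ← hsrcj, he]
        have := hinj i j hi' hj' this
        omega
      · -- si against, sj along
        rw [stepSrc, hb1] at hsrci; rw [stepTgt, hb1] at htgti
        rw [stepSrc, hb2] at hsrcj; rw [stepTgt, hb2] at htgtj
        simp only [cond_false, cond_true] at hsrci htgti hsrcj htgtj
        refine hmix ?_ ?_ ?_
        · rw [hfu, hfu, ← htgti, ← hsrcj, he]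
        · rw [hfu, hfu, ← hsrci, ← htgtj, he]
        · refine Prod.ext ?_ ?_
          · show sj.1 = si.1; rw [he]
          · show sj.2 = !si.2; simp [hb1, hb2]
      · -- si along, sj against
        rw [stepSrc, hb1] at hsrci; rw [stepTgt, hb1] at htgti
        rw [stepSrc, hb2] at hsrcj; rw [stepTgt, hb2] at htgtj
        simp only [cond_false, cond_true] at hsrci htgti hsrcj htgtj
        refine hmix ?_ ?_ ?_
        · rw [hfu, hfu, ← htgti, ← hsrcj, he]
        · rw [hfu, hfu, ← hsrci, ← htgtj, he]
        · refine Prod.ext ?_ ?_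
          · show sj.1 = si.1; rw [he]
          · show sj.2 = !si.2; simp [hb1, hb2]
      · -- both along
        rw [stepSrc, hb1] at hsrci
        rw [stepSrc, hb2] at hsrcj
        simp only [cond_true] at hsrci hsrcj
        have : f i = f j := by rw [hfu, hfu, ← hsrci, ← hsrcj, he]
        have := hinj i j hi' hj' this
        omega
    have hdrop : (vertsOf Γ v l).dropLast.Nodup := by
      rw [vertsOf_eq]
      rw [← List.map_dropLast, List.range_succ, List.dropLast_concat]
      exact hnd
    have htail : (vertsOf Γ v l).tail.Nodup := by
      rw [vertsOf_eq, ← List.map_tail, List.range_succ_eq_map, List.tail_cons, List.map_map]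
      rw [List.nodup_map_iff_inj_on List.nodup_range]
      intro i hi j hj hij
      simp only [List.mem_range] at hi hj
      simp only [Function.comp] at hij
      simp only [← hfu] at hij
      rcases Nat.lt_or_ge (i + 1) l.length with h1 | h1
      · rcases Nat.lt_or_ge (j + 1) l.length with h2 | h2
        · have := hinj i.succ j.succ h1 h2 hij
          omega
        · have hjl : j.succ = l.length := by omega
          rw [hjl, hfl] at hij
          have := hinj i.succ 0 h1 hpos hij
          omega
      · have hil : i.succ = l.length := by omega
        rcases Nat.lt_or_ge (j + 1) l.length with h2 | h2
        · rw [hil, hfl] at hij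
          have := hinj 0 j.succ hpos h2 hij
          omega
        · omega
    exact hA ⟨⟨v, l, hch⟩, hne, hcl, hedges, hdrop, htail⟩
  · -- a repeated vertex: split off a shorter closed walk and use the IH
    obtain ⟨i, j, hij, hjn, hfe⟩ := dup_of_not_nodup_range_map _ f hnd
    set pre := l.take i with hpre
    set mid := (l.take j).drop i with hmid
    set suf := l.drop j with hsuf
    have h1 : pre ++ mid = l.take j := by
      have htt : List.take i (List.take j l) = List.take i l := by
        rw [List.take_take, min_eq_left (by omega : i ≤ j)]
      rw [hpre, hmid, ← htt]
      exact List.take_append_drop i (l.take j)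
    have h2 : l = pre ++ (mid ++ suf) := by
      rw [← List.append_assoc, h1, hsuf, List.take_append_drop]
    have hmidlen : mid.length = j - i := by
      rw [hmid, List.length_drop, List.length_take]
      omega
    obtain ⟨hchpre, hchrest⟩ := chain_split pre (mid ++ suf) v (h2 ▸ hch)
    obtain ⟨hchmid, _⟩ := chain_split mid suf _ hchrest
    have hendmid : endOf Γ (endOf Γ v pre) mid = endOf Γ v pre := by
      rw [← endOf_append, h1]
      exact hfe.symm
    have hmidne : mid ≠ [] := by
      intro h
      rw [h] at hmidlen
      simp at hmidlen
      omega
    obtain ⟨m₁, s, m₂, hm⟩ := IH mid.length (by omega) mid (endOf Γ v pre) rfl hmidne hchmid hendmid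
    exact hbt (pre ++ m₁) s (m₂ ++ suf) (by rw [h2, hm]; simp)

end Backtrack
section ClosedWalks

variable {G : Type} [Group G]

/-- In an acyclic graph, every closed walk has trivial voltage. -/
theorem closed_volList {Γ : MGraph} (hA : Acyclic Γ) (γ' : Γ.E → G) :
    ∀ (n : ℕ) (l : List (Γ.E × Bool)) (v : Γ.V), l.length = n →
      chain Γ v l → endOf Γ v l = v → volList γ' l = 1 := by
  intro n
  induction n using Nat.strong_induction_on with
  | _ n IH =>
  intro l v hlen hch hcl
  rcases eq_or_ne l [] with rfl | hne
  · rfl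
  · obtain ⟨l₁, s, l₂, rfl⟩ := exists_backtrack hA n l v hlen hne hch hcl
    obtain ⟨hch₁, hch₂⟩ := chain_split l₁ (s :: flipStep s :: l₂) v hch
    obtain ⟨hsrc, hch₃⟩ := hch₂
    obtain ⟨_, hch₄⟩ := hch₃
    have htf : stepTgt Γ (flipStep s) = endOf Γ v l₁ := by
      rw [stepTgt_flip, hsrc]
    have hch₅ : chain Γ (endOf Γ v l₁) l₂ := htf ▸ hch₄
    have hend : endOf Γ v (l₁ ++ l₂) = v := by
      rw [endOf_append, ← htf]
      rw [endOf_append] at hcl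
      exact hcl
    have hchred : chain Γ v (l₁ ++ l₂) := chain_append Γ l₁ l₂ v hch₁ hch₅
    have hlt : (l₁ ++ l₂).length < n := by
      rw [← hlen]
      simp
    have hred := IH (l₁ ++ l₂).length hlt (l₁ ++ l₂) v rfl hchred hend
    rw [volList_append] at hred
    rw [volList_append, volList_cons, volList_cons, stepVal_flip, ← mul_assoc, ← mul_assoc,
      mul_assoc _ (stepVal γ' s), mul_inv_cancel, mul_one]
    exact hred

/-- Lift a list of steps all of whose edges lie in `S` to the induced subgraph. -/
theorem lift_to_induced {Δ' : MGraph} {S : Set Δ'.E} :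
    ∀ (l : List (Δ'.E × Bool)) (v : (edgeInduced Δ' S).toMGraph.V),
      (∀ s ∈ l, s.1 ∈ S) → chain Δ' v.1 l →
      ∃ l' : List ((edgeInduced Δ' S).toMGraph.E × Bool),
        l'.map (Subgraph.incl (edgeInduced Δ' S)).mapStep = l ∧
        chain (edgeInduced Δ' S).toMGraph v l' := by
  intro l
  induction l with
  | nil => intro v _ _; exact ⟨[], rfl, trivial⟩
  | cons s rest ih =>
    intro v hmem hch
    obtain ⟨e, b⟩ := s
    have heS : e ∈ S := hmem (e, b) List.mem_cons_self
    set s' : (edgeInduced Δ' S).toMGraph.E × Bool := (⟨e, heS⟩, b) with hs'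
    have hsrc : stepSrc (edgeInduced Δ' S).toMGraph s' = v := by
      apply Subtype.ext
      have : (stepSrc (edgeInduced Δ' S).toMGraph s').1 = stepSrc Δ' (e, b) := by
        cases b <;> rfl
      rw [this, hch.1]
    have htgt : (stepTgt (edgeInduced Δ' S).toMGraph s').1 = stepTgt Δ' (e, b) := by
      cases b <;> rfl
    obtain ⟨l', hmap, hch'⟩ := ih (stepTgt (edgeInduced Δ' S).toMGraph s')
      (fun t ht => hmem t (List.mem_cons_of_mem _ ht)) (htgt ▸ hch.2)
    exact ⟨s' :: l', by rw [List.map_cons, hmap]; rfl, hsrc, hch'⟩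

/-- A closed walk all of whose edges lie in a spanning tree set has trivial voltage. -/
theorem closed_Swalk_volList {Δ' : MGraph} (γ : Δ'.E → G) {S : Set Δ'.E}
    (hS : IsSpanningTreeSet Δ' S) :
    ∀ (l : List (Δ'.E × Bool)) (v : Δ'.V),
      (∀ s ∈ l, s.1 ∈ S) → chain Δ' v l → endOf Δ' v l = v → volList γ l = 1 := by
  intro l v hmem hch hcl
  rcases eq_or_ne l [] with rfl | hne
  · rfl
  · obtain ⟨s₀, rest, rfl⟩ := List.exists_cons_of_ne_nil hne
    have hv : v ∈ endpoints Δ' S := by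
      refine ⟨s₀.1, hmem s₀ List.mem_cons_self, ?_⟩
      rcases hb : s₀.2 with _ | _
      · right
        have := hch.1
        rw [stepSrc, hb] at this
        exact this
      · left
        have := hch.1
        rw [stepSrc, hb] at this
        exact this
    set v' : (edgeInduced Δ' S).toMGraph.V := ⟨v, hv⟩ with hv'
    obtain ⟨l', hmap, hch'⟩ := lift_to_induced (s₀ :: rest) v' hmem hch
    have hend' : endOf (edgeInduced Δ' S).toMGraph v' l' = v' := by
      apply Subtype.ext
      have := endOf_map (Subgraph.incl (edgeInduced Δ' S)) l' v'
      rw [hmap] at this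
      have h2 : ((endOf (edgeInduced Δ' S).toMGraph v' l')).1
          = endOf Δ' v (s₀ :: rest) := this.symm
      rw [h2, hcl]
    have h1 := closed_volList hS.1 (fun E : (edgeInduced Δ' S).toMGraph.E => γ E.1)
      l'.length l' v' rfl hch' hend'
    have h2 : volList γ (s₀ :: rest)
        = volList (fun E : (edgeInduced Δ' S).toMGraph.E => γ E.1) l' := by
      rw [← hmap]
      simp only [volList, List.map_map]
      congr 1
    rw [h2, h1]

/-- Any two walks through a spanning tree set with the same endpoints have equal voltage. -/
theorem Swalk_vol_unique {Δ' : MGraph} (γ : Δ'.E → G) {S : Set Δ'.E}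
    (hS : IsSpanningTreeSet Δ' S) {l₁ l₂ : List (Δ'.E × Bool)} {u w : Δ'.V}
    (m₁ : ∀ s ∈ l₁, s.1 ∈ S) (m₂ : ∀ s ∈ l₂, s.1 ∈ S)
    (c₁ : chain Δ' u l₁) (c₂ : chain Δ' u l₂)
    (e₁ : endOf Δ' u l₁ = w) (e₂ : endOf Δ' u l₂ = w) :
    volList γ l₁ = volList γ l₂ := by
  have crev : chain Δ' w (l₂.reverse.map flipStep) := by
    have := chain_reverse Δ' l₂ u c₂
    rwa [e₂] at this
  have erev : endOf Δ' w (l₂.reverse.map flipStep) = u := by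
    have := endOf_reverse Δ' l₂ u c₂
    rwa [e₂] at this
  have hchain : chain Δ' u (l₁ ++ l₂.reverse.map flipStep) :=
    chain_append Δ' _ _ _ c₁ (by rw [e₁]; exact crev)
  have hend : endOf Δ' u (l₁ ++ l₂.reverse.map flipStep) = u := by
    rw [endOf_append, e₁, erev]
  have hmem : ∀ s ∈ l₁ ++ l₂.reverse.map flipStep, s.1 ∈ S := by
    intro s hs
    rcases List.mem_append.mp hs with h | h
    · exact m₁ s h
    · obtain ⟨t, ht, rfl⟩ := List.mem_map.mp h
      exact m₂ t (List.mem_reverse.mp ht)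
  have := closed_Swalk_volList γ hS _ u hmem hchain hend
  rw [volList_append, volList_reverse, mul_inv_eq_one] at this
  exact this

/-- Any two vertices are joined by a walk through a spanning tree set. -/
theorem exists_Swalk {Δ' : MGraph} {S : Set Δ'.E} (hS : IsSpanningTreeSet Δ' S) (u v : Δ'.V) :
    ∃ l : List (Δ'.E × Bool), (∀ s ∈ l, s.1 ∈ S) ∧ chain Δ' u l ∧ endOf Δ' u l = v := by
  obtain ⟨q, hq1, hq2⟩ := hS.2.1 ⟨u, hS.2.2 u⟩ ⟨v, hS.2.2 v⟩
  refine ⟨q.steps.map (Subgraph.incl (edgeInduced Δ' S)).mapStep, ?_, ?_, ?_⟩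
  · intro s hs
    obtain ⟨t, _, rfl⟩ := List.mem_map.mp hs
    exact t.1.2
  · have := (Subgraph.incl (edgeInduced Δ' S)).chain_map q.steps q.first q.ok
    rwa [hq1] at this
  · have h1 := endOf_map (Subgraph.incl (edgeInduced Δ' S)) q.steps q.first
    have h3 : endOf (edgeInduced Δ' S).toMGraph q.first q.steps = ⟨v, hS.2.2 v⟩ := hq2
    rw [hq1] at h1 h3
    exact h1.trans (congrArg (Subgraph.incl (edgeInduced Δ' S)).onV h3)

end ClosedWalks
section Derived

variable {Δ' : MGraph} {G : Type} [Group G]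

theorem derived_endOf (γ : Δ'.E → G) :
    ∀ (l : List ((derivedGraph Δ' γ).E × Bool)) (p : (derivedGraph Δ' γ).V),
      chain (derivedGraph Δ' γ) p l →
      endOf (derivedGraph Δ' γ) p l
        = (endOf Δ' p.1 (l.map (derivedProj Δ' γ).mapStep),
           p.2 * volList γ (l.map (derivedProj Δ' γ).mapStep)) := by
  intro l
  induction l with
  | nil => intro p _; simp [endOf, volList]; rfl
  | cons s rest ih =>
    intro p hch
    obtain ⟨⟨e, k⟩, b⟩ := s
    have hsrc := hch.1
    have hrec := ih (stepTgt (derivedGraph Δ' γ) ((e, k), b)) hch.2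
    rcases b with _ | _
    · -- backward step
      have hp : p = (Δ'.τ e, k * γ e) := hsrc.symm
      rw [endOf_cons, hrec]
      have htgt : stepTgt (derivedGraph Δ' γ) ((e, k), false) = (Δ'.ι e, k) := rfl
      rw [htgt]
      rw [List.map_cons, volList_cons, endOf_cons]
      have h1 : stepTgt Δ' ((derivedProj Δ' γ).mapStep ((e, k), false)) = Δ'.ι e := rfl
      rw [h1, hp]
      refine Prod.ext rfl ?_
      show k * volList γ _ = (k * γ e) * (stepVal γ ((derivedProj Δ' γ).mapStep ((e, k), false))
        * volList γ _)
      have h2 : stepVal γ ((derivedProj Δ' γ).mapStep ((e, k), false)) = (γ e)⁻¹ := rfl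
      rw [h2]
      group
    · -- forward step
      have hp : p = (Δ'.ι e, k) := hsrc.symm
      rw [endOf_cons, hrec]
      have htgt : stepTgt (derivedGraph Δ' γ) ((e, k), true) = (Δ'.τ e, k * γ e) := rfl
      rw [htgt]
      rw [List.map_cons, volList_cons, endOf_cons]
      have h1 : stepTgt Δ' ((derivedProj Δ' γ).mapStep ((e, k), true)) = Δ'.τ e := rfl
      rw [h1, hp]
      refine Prod.ext rfl ?_
      show (k * γ e) * volList γ _ = k * (stepVal γ ((derivedProj Δ' γ).mapStep ((e, k), true))
        * volList γ _)
      have h2 : stepVal γ ((derivedProj Δ' γ).mapStep ((e, k), true)) = γ e := rfl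
      rw [h2]
      group

theorem derived_lift (γ : Δ'.E → G) :
    ∀ (l : List (Δ'.E × Bool)) (v : Δ'.V) (k : G), chain Δ' v l →
      ∃ l' : List ((derivedGraph Δ' γ).E × Bool),
        chain (derivedGraph Δ' γ) (v, k) l' ∧
        endOf (derivedGraph Δ' γ) (v, k) l' = (endOf Δ' v l, k * volList γ l) := by
  intro l
  induction l with
  | nil => intro v k _; exact ⟨[], trivial, by simp [endOf, volList]; rfl⟩
  | cons s rest ih =>
    intro v k hch
    obtain ⟨e, b⟩ := s
    have hsrc := hch.1
    rcases b with _ | _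
    · -- backward step
      have hv : Δ'.τ e = v := hsrc
      obtain ⟨l', hch', hend'⟩ := ih (Δ'.ι e) (k * (γ e)⁻¹) hch.2
      refine ⟨((e, k * (γ e)⁻¹), false) :: l', ⟨?_, ?_⟩, ?_⟩
      · show ((derivedGraph Δ' γ).τ (e, k * (γ e)⁻¹)) = (v, k)
        show (Δ'.τ e, k * (γ e)⁻¹ * γ e) = (v, k)
        rw [hv]
        refine Prod.ext rfl ?_
        group
      · exact hch'
      · rw [endOf_cons]
        show endOf (derivedGraph Δ' γ) (Δ'.ι e, k * (γ e)⁻¹) l' = _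
        rw [hend', volList_cons]
        refine Prod.ext rfl ?_
        show k * (γ e)⁻¹ * volList γ rest = k * ((γ e)⁻¹ * volList γ rest)
        group
    · -- forward step
      have hv : Δ'.ι e = v := hsrc
      obtain ⟨l', hch', hend'⟩ := ih (Δ'.τ e) (k * γ e) hch.2
      refine ⟨((e, k), true) :: l', ⟨?_, ?_⟩, ?_⟩
      · show ((derivedGraph Δ' γ).ι (e, k)) = (v, k)
        show (Δ'.ι e, k) = (v, k)
        rw [hv]
      · exact hch'
      · rw [endOf_cons]
        show endOf (derivedGraph Δ' γ) (Δ'.τ e, k * γ e) l' = _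
        rw [hend', volList_cons]
        refine Prod.ext rfl ?_
        show k * γ e * volList γ rest = k * (γ e * volList γ rest)
        group

/-- The subgroup of voltages of closed walks at a base vertex. -/
def loopSubgroup (γ : Δ'.E → G) (v₀ : Δ'.V) : Subgroup G where
  carrier := {h | ∃ l : List (Δ'.E × Bool), chain Δ' v₀ l ∧ endOf Δ' v₀ l = v₀ ∧ volList γ l = h}
  one_mem' := ⟨[], trivial, rfl, rfl⟩
  mul_mem' := by
    rintro a b ⟨l₁, c₁, e₁, rfl⟩ ⟨l₂, c₂, e₂, rfl⟩
    exact ⟨l₁ ++ l₂, chain_append _ _ _ _ c₁ (by rw [e₁]; exact c₂),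
      by rw [endOf_append, e₁, e₂], volList_append γ l₁ l₂⟩
  inv_mem' := by
    rintro a ⟨l, c, e, rfl⟩
    refine ⟨l.reverse.map flipStep, ?_, ?_, volList_reverse γ l⟩
    · have := chain_reverse Δ' l v₀ c
      rwa [e] at this
    · have := endOf_reverse Δ' l v₀ c
      rwa [e] at this

end Derived
/-- Let `(Δ, γ)` be a connected voltage graph whose voltages generate
`G`, `v₀` a base vertex, `S` a spanning tree set, and `Γ₀` the component of `Δ ×_γ G`
containing `(v₀, 1)`.  Then `H = {h ∈ G : (v₀, h) ∈ Γ₀}` coincides with the subgroup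
`⟨γ_S(E_Δ)⟩` generated by the values of the condensation `γ_S` (in particular it is a
subgroup of `G`). -/
theorem component_stabilizer_eq_condensation_closure {Δ : MGraph} {G : Type} [Group G]
    (γ : Δ.E → G) (hΔ : Connected Δ)
    (hgen : Subgroup.closure (Set.range γ) = ⊤)
    (v₀ : Δ.V) (S : Set Δ.E) (hS : IsSpanningTreeSet Δ S)
    (γS : Δ.E → G) (hcond : IsCondensation γ S v₀ γS) :
    {h : G | Reachable (derivedGraph Δ γ) (v₀, 1) (v₀, h)} =
      (Subgroup.closure (Set.range γS) : Set G) := by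
  classical
  set N := Subgroup.closure (Set.range γS) with hN
  choose tl tlS tlchain tlend using fun v => exists_Swalk hS v₀ v
  set t : Δ.V → G := fun v => volList γ (tl v) with ht
  have htv₀ : t v₀ = 1 := closed_Swalk_volList γ hS (tl v₀) v₀ (tlS v₀) (tlchain v₀) (tlend v₀)
  have hedge : ∀ e : Δ.E, t (Δ.ι e) * γ e * (t (Δ.τ e))⁻¹ ∈ N := by
    intro e
    by_cases heS : e ∈ S
    · have huniq : volList γ (tl (Δ.ι e) ++ [(e, true)]) = volList γ (tl (Δ.τ e)) := by
        apply Swalk_vol_unique γ hS (u := v₀) (w := Δ.τ e)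
        · intro s hs
          rcases List.mem_append.mp hs with hmm | hmm
          · exact tlS _ s hmm
          · rw [List.mem_singleton.mp hmm]; exact heS
        · exact tlS _
        · exact chain_append _ _ _ _ (tlchain _) (by rw [tlend]; exact ⟨rfl, trivial⟩)
        · exact tlchain _
        · rw [endOf_append, tlend]; rfl
        · exact tlend _
      have h2 : t (Δ.ι e) * γ e = t (Δ.τ e) := by
        show volList γ (tl (Δ.ι e)) * γ e = volList γ (tl (Δ.τ e))
        rw [← huniq, volList_append, volList_cons, volList_nil]
        simp [stepVal]
      rw [h2, mul_inv_cancel]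
      exact one_mem _
    · obtain ⟨p₁, p₂, h1, h2, h3, h4, _, _, m₁, m₂, hγS⟩ := hcond.2 e heS
      have ht1 : t (Δ.ι e) = volList γ p₁.steps := by
        apply Swalk_vol_unique γ hS (u := v₀) (w := Δ.ι e) (tlS _) m₁ (tlchain _) ?_ (tlend _) ?_
        · have := p₁.ok; rwa [h1] at this
        · have h5 : endOf Δ p₁.first p₁.steps = Δ.ι e := h2
          rwa [h1] at h5
      have ht2 : t (Δ.τ e) = (volList γ p₂.steps)⁻¹ := by
        rw [← volList_reverse]
        apply Swalk_vol_unique γ hS (u := v₀) (w := Δ.τ e) (tlS _) ?_ (tlchain _) ?_ (tlend _) ?_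
        · intro s hs
          obtain ⟨u', hu', rfl⟩ := List.mem_map.mp hs
          exact m₂ u' (List.mem_reverse.mp hu')
        · have h5 := chain_reverse Δ p₂.steps p₂.first p₂.ok
          rwa [show endOf Δ p₂.first p₂.steps = v₀ from h4] at h5
        · have h5 := endOf_reverse Δ p₂.steps p₂.first p₂.ok
          rw [show endOf Δ p₂.first p₂.steps = v₀ from h4] at h5
          rw [h5, h3]
      rw [ht1, ht2, inv_inv]
      have h6 : volList γ p₁.steps * γ e * volList γ p₂.steps = γS e := by
        rw [hγS]; rfl
      rw [h6]
      exact Subgroup.subset_closure (Set.mem_range_self e)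
  have key : ∀ (l : List (Δ.E × Bool)) (u : Δ.V), chain Δ u l →
      t u * volList γ l * (t (endOf Δ u l))⁻¹ ∈ N := by
    intro l
    induction l with
    | nil =>
      intro u _
      show t u * volList γ [] * (t u)⁻¹ ∈ N
      rw [volList_nil, mul_one, mul_inv_cancel]
      exact one_mem _
    | cons s rest ih =>
      intro u hch
      have h1 : t u * stepVal γ s * (t (stepTgt Δ s))⁻¹ ∈ N := by
        obtain ⟨e, b⟩ := s
        rcases b with _ | _
        · have hv : Δ.τ e = u := hch.1
          have h7 := inv_mem (hedge e)
          rw [hv] at h7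
          have heq : (t (Δ.ι e) * γ e * (t u)⁻¹)⁻¹
              = t u * stepVal γ (e, false) * (t (stepTgt Δ (e, false)))⁻¹ := by
            show _ = t u * (γ e)⁻¹ * (t (Δ.ι e))⁻¹
            group
          rwa [heq] at h7
        · have hv : Δ.ι e = u := hch.1
          have h7 := hedge e
          rw [hv] at h7
          exact h7
      have h2 := ih (stepTgt Δ s) hch.2
      have h3 := mul_mem h1 h2
      have heq : (t u * stepVal γ s * (t (stepTgt Δ s))⁻¹) *
          (t (stepTgt Δ s) * volList γ rest * (t (endOf Δ (stepTgt Δ s) rest))⁻¹)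
          = t u * volList γ (s :: rest) * (t (endOf Δ u (s :: rest)))⁻¹ := by
        rw [volList_cons, endOf_cons]
        group
      rwa [heq] at h3
  ext h
  simp only [Set.mem_setOf_eq, SetLike.mem_coe]
  constructor
  · rintro ⟨q, hq1, hq2⟩
    have hch : chain (derivedGraph Δ γ) ((v₀ : Δ.V), (1 : G)) q.steps := by
      have := q.ok; rwa [hq1] at this
    have hde := derived_endOf γ q.steps ((v₀ : Δ.V), (1 : G)) hch
    have hlast : endOf (derivedGraph Δ γ) ((v₀ : Δ.V), (1 : G)) q.steps = (v₀, h) := by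
      rw [← hq1]; exact hq2
    rw [hlast] at hde
    have hfst : endOf Δ v₀ (q.steps.map (derivedProj Δ γ).mapStep) = v₀ :=
      (congrArg Prod.fst hde).symm
    have hsnd : 1 * volList γ (q.steps.map (derivedProj Δ γ).mapStep) = h :=
      (congrArg Prod.snd hde).symm
    rw [one_mul] at hsnd
    have hchΔ : chain Δ v₀ (q.steps.map (derivedProj Δ γ).mapStep) :=
      (derivedProj Δ γ).chain_map _ _ hch
    have hk := key (q.steps.map (derivedProj Δ γ).mapStep) v₀ hchΔ
    rw [hfst, htv₀, hsnd] at hk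
    rwa [inv_one, mul_one, one_mul] at hk
  · intro hh
    have hle : N ≤ loopSubgroup γ v₀ := by
      rw [hN]
      refine (Subgroup.closure_le _).mpr ?_
      rintro x ⟨e, rfl⟩
      by_cases heS : e ∈ S
      · rw [hcond.1 e heS]
        exact one_mem _
      · obtain ⟨p₁, p₂, h1, h2, h3, h4, _, _, _, _, hγS⟩ := hcond.2 e heS
        have hend1 : endOf Δ v₀ p₁.steps = Δ.ι e := by
          have h5 : endOf Δ p₁.first p₁.steps = Δ.ι e := h2
          rwa [h1] at h5
        refine ⟨p₁.steps ++ (e, true) :: p₂.steps, ?_, ?_, ?_⟩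
        · apply chain_append
          · have := p₁.ok; rwa [h1] at this
          · rw [hend1]
            refine ⟨rfl, ?_⟩
            have := p₂.ok; rwa [h3] at this
        · rw [endOf_append, hend1, endOf_cons]
          show endOf Δ (Δ.τ e) p₂.steps = v₀
          rw [← h3]
          exact h4
        · rw [volList_append, volList_cons, hγS, voltage_eq_volList, voltage_eq_volList]
          show _ * (stepVal γ (e, true) * _) = _
          have h5 : stepVal γ (e, true) = γ e := rfl
          rw [h5, mul_assoc]
    obtain ⟨l, hchl, hendl, hvoll⟩ := hle hh
    obtain ⟨l', hch', hend'⟩ := derived_lift γ l v₀ 1 hchl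
    refine ⟨⟨(v₀, 1), l', hch'⟩, rfl, ?_⟩
    show endOf (derivedGraph Δ γ) (v₀, 1) l' = (v₀, h)
    rw [hend', hendl, hvoll, one_mul]

end VG
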